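/- Burge reflection symmetry: for all integers p, p' ≥ 1 and all integers r, s, M1, L1, M2, L2 with M1, M2, L1, L2 ≥ 0, X_{r,s}^{(p,p')}(M1,L1,M2,L2) = X_{s−L1+L2, r+M1−M2}^{(p',p)}(L1,M1,L2,M2). -/
import Mathlib


/-!
STATEMENT 13: the Burge reflection symmetry
`X_{r,s}^{(p,p')}(M₁,L₁,M₂,L₂) = X_{s−L₁+L₂, r+M₁−M₂}^{(p',p)}(L₁,M₁,L₂,M₂)`
for `p, p' ≥ 1` and nonnegative `M₁, L₁, M₂, L₂`.
-/

noncomputable section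

namespace Stmt13

abbrev K : Type := RatFunc ℚ

def q : K := RatFunc.X

def poch (n : ℕ) : K := ∏ k ∈ Finset.range n, (1 - q ^ (k + 1))

def binq (n k : ℤ) : K :=
  if 0 ≤ k ∧ k ≤ n then poch n.toNat / (poch k.toNat * poch (n - k).toNat) else 0

/-- The Burge polynomial `X_{r,s}^{(p,p')}(M₁,L₁,M₂,L₂)`; the sum over
`j ∈ ℤ` has finite support (for `p ≥ 1`), hence is written as a `finsum`. -/
def X4 (p p' r s M1 L1 M2 L2 : ℤ) : K :=
  ∑ᶠ j : ℤ,
    (q ^ (j * (p * p' * j + p' * (M1 - M2 + r) - p * s)) *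
        binq (M1 + L1 - (p' - p) * j) (M1 + p * j) *
        binq (M2 + L2 + (p' - p) * j) (M2 - p * j)
      - q ^ ((p * j + M1 - M2 + r) * (p' * j + s)) *
        binq (M1 + L1 - (p' - p) * j + r - s) (M1 + p * j + r) *
        binq (M2 + L2 + (p' - p) * j - r + s) (M2 - p * j - r))

/-- The symmetric Burge polynomial `X_{r,s}^{(p,p')}(M,L) = X_{r,s}^{(p,p')}(M,L,M,L)`. -/
def X (p p' r s M L : ℤ) : K := X4 p p' r s M L M L

lemma binq_symm (n k : ℤ) : binq n k = binq n (n - k) := by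
  unfold binq
  by_cases h : 0 ≤ k ∧ k ≤ n
  · rw [if_pos h, if_pos ⟨by omega, by omega⟩]
    have h1 : n - (n - k) = k := by ring
    rw [h1, mul_comm]
  · rw [if_neg h, if_neg (by omega)]

lemma binq_ne_zero {n k : ℤ} (h : binq n k ≠ 0) : 0 ≤ k ∧ k ≤ n := by
  by_contra hc
  exact h (by simp [binq, hc])

lemma abs_le_abs_mul {p j : ℤ} (hp : 1 ≤ p) : |j| ≤ |p * j| := by
  rw [abs_mul]
  exact le_mul_of_one_le_left (abs_nonneg j) (le_trans hp (le_abs_self p))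

theorem burge_reflection (p pp r s M1 L1 M2 L2 : ℤ) (hp : 1 ≤ p) (hpp : 1 ≤ pp)
    (hM1 : 0 ≤ M1) (hL1 : 0 ≤ L1) (hM2 : 0 ≤ M2) (hL2 : 0 ≤ L2) :
    X4 p pp r s M1 L1 M2 L2 = X4 pp p (s - L1 + L2) (r + M1 - M2) L1 M1 L2 M2 := by
  set A : ℤ → K := fun j =>
    q ^ (j * (p * pp * j + pp * (M1 - M2 + r) - p * s)) *
      binq (M1 + L1 - (pp - p) * j) (M1 + p * j) *
      binq (M2 + L2 + (pp - p) * j) (M2 - p * j) with hA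
  set B : ℤ → K := fun j =>
    q ^ ((p * j + M1 - M2 + r) * (pp * j + s)) *
      binq (M1 + L1 - (pp - p) * j + r - s) (M1 + p * j + r) *
      binq (M2 + L2 + (pp - p) * j - r + s) (M2 - p * j - r) with hB
  set A' : ℤ → K := fun j =>
    q ^ (j * (pp * p * j + p * (L1 - L2 + (s - L1 + L2)) - pp * (r + M1 - M2))) *
      binq (L1 + M1 - (p - pp) * j) (L1 + pp * j) *
      binq (L2 + M2 + (p - pp) * j) (L2 - pp * j) with hA'
  set B' : ℤ → K := fun j =>
    q ^ ((pp * j + L1 - L2 + (s - L1 + L2)) * (p * j + (r + M1 - M2))) *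
      binq (L1 + M1 - (p - pp) * j + (s - L1 + L2) - (r + M1 - M2))
        (L1 + pp * j + (s - L1 + L2)) *
      binq (L2 + M2 + (p - pp) * j - (s - L1 + L2) + (r + M1 - M2))
        (L2 - pp * j - (s - L1 + L2)) with hB'
  have hfinA : (Function.support A).Finite := by
    apply Set.Finite.subset (Set.finite_Icc (-(M1 + L1)) (M1 + L1))
    intro j hj
    simp only [Function.mem_support, hA] at hj
    have h1 := binq_ne_zero (fun h => hj (by rw [h]; ring))
    have hd : (pp - p) * j = pp * j - p * j := by ring
    have hpj : -M1 ≤ p * j ∧ pp * j ≤ L1 := ⟨by omega, by omega⟩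
    have habs : |p * j| ≤ M1 + L1 ∨ |pp * j| ≤ M1 + L1 := by
      rcases le_or_gt 0 j with h | h
      · right
        have : 0 ≤ pp * j := by positivity
        rw [abs_of_nonneg this]; omega
      · left
        have : p * j ≤ 0 := by nlinarith
        rw [abs_of_nonpos this]; omega
    have : |j| ≤ M1 + L1 := by
      rcases habs with h | h
      · exact le_trans (abs_le_abs_mul hp) h
      · exact le_trans (abs_le_abs_mul hpp) h
    exact Set.mem_Icc.mpr (abs_le.mp this)
  have hfinB : (Function.support B).Finite := by
    apply Set.Finite.subset (Set.finite_Icc (-(M1 + M2 + |r|)) (M1 + M2 + |r|))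
    intro j hj
    simp only [Function.mem_support, hB] at hj
    have h1 := binq_ne_zero (fun h => hj (by rw [h]; ring))
    have h2 := binq_ne_zero (fun h : binq (M2 + L2 + (pp - p) * j - r + s) (M2 - p * j - r) = 0
      => hj (by rw [h]; ring))
    have hd : (pp - p) * j = pp * j - p * j := by ring
    have hpj : -(M1 + r) ≤ p * j ∧ p * j ≤ M2 - r := ⟨by omega, by omega⟩
    have habs : |p * j| ≤ M1 + M2 + |r| := by
      rw [abs_le]
      constructor <;> [skip; skip] <;>
        · have := le_abs_self r; have := neg_abs_le r; omega
    have : |j| ≤ M1 + M2 + |r| := le_trans (abs_le_abs_mul hp) habs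
    exact Set.mem_Icc.mpr (abs_le.mp this)
  have hAeq : ∀ j : ℤ, A (-j) = A' j := by
    intro j
    simp only [hA, hA']
    have e1 : M1 + L1 - (pp - p) * -j = L1 + M1 - (p - pp) * j := by ring
    have e2 : M1 + p * -j = (L1 + M1 - (p - pp) * j) - (L1 + pp * j) := by ring
    have e3 : M2 + L2 + (pp - p) * -j = L2 + M2 + (p - pp) * j := by ring
    have e4 : M2 - p * -j = (L2 + M2 + (p - pp) * j) - (L2 - pp * j) := by ring
    have e5 : (-j) * (p * pp * -j + pp * (M1 - M2 + r) - p * s)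
        = j * (pp * p * j + p * (L1 - L2 + (s - L1 + L2)) - pp * (r + M1 - M2)) := by ring
    rw [e1, e2, e3, e4, e5, ← binq_symm, ← binq_symm]
  have hBeq : ∀ j : ℤ, B j = B' j := by
    intro j
    simp only [hB, hB']
    have e1 : L1 + M1 - (p - pp) * j + (s - L1 + L2) - (r + M1 - M2)
        = M2 + L2 + (pp - p) * j - r + s := by ring
    have e2 : L1 + pp * j + (s - L1 + L2)
        = (M2 + L2 + (pp - p) * j - r + s) - (M2 - p * j - r) := by ring
    have e3 : L2 + M2 + (p - pp) * j - (s - L1 + L2) + (r + M1 - M2)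
        = M1 + L1 - (pp - p) * j + r - s := by ring
    have e4 : L2 - pp * j - (s - L1 + L2)
        = (M1 + L1 - (pp - p) * j + r - s) - (M1 + p * j + r) := by ring
    have e5 : (pp * j + L1 - L2 + (s - L1 + L2)) * (p * j + (r + M1 - M2))
        = (p * j + M1 - M2 + r) * (pp * j + s) := by ring
    rw [e1, e2, e3, e4, e5, ← binq_symm, ← binq_symm]
    ring
  have hAcomp : A' = fun j => A ((Equiv.neg ℤ) j) := by
    funext j
    rw [← hAeq j]
    rfl
  have hfinA' : (Function.support A').Finite := by
    rw [hAcomp]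
    exact hfinA.preimage (Function.Injective.injOn (Equiv.neg ℤ).injective)
  have hfinB' : (Function.support B').Finite := by
    have : B' = B := by funext j; rw [← hBeq j]
    rw [this]; exact hfinB
  have lhs_eq : X4 p pp r s M1 L1 M2 L2 = (∑ᶠ j, A j) - (∑ᶠ j, B j) := by
    unfold X4
    rw [← finsum_sub_distrib hfinA hfinB]
  have rhs_eq : X4 pp p (s - L1 + L2) (r + M1 - M2) L1 M1 L2 M2
      = (∑ᶠ j, A' j) - (∑ᶠ j, B' j) := by
    unfold X4
    rw [← finsum_sub_distrib hfinA' hfinB']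
  rw [lhs_eq, rhs_eq]
  have h1 : ∑ᶠ j, A' j = ∑ᶠ j, A j := by
    rw [hAcomp]
    exact finsum_comp_equiv (Equiv.neg ℤ)
  have h2 : ∑ᶠ j, B' j = ∑ᶠ j, B j := by
    exact finsum_congr fun j => (hBeq j).symm
  rw [h1, h2]

end Stmt13
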